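/- (Lokal-global-Prinzip) Let f : X → Y be a locally convex continuous map from a connected topological space X to a geodesic q-manifold Y, and assume that the induced map f# : X^f → Y is a closed map. Then the image f(X) is weakly convex: any two points of f(X) are the end points of some geodesic in Y. -/

import Mathlib

universe u v w

/-- A convexity-space structure on an (open) subset `U` of a topological space `Y`,
given by a map `C` assigning to points `x, y ∈ U` a subset `C x y ⊆ U`:
`U` with its subspace topology is Hausdorff, `C` is continuous (as a map into the
power set of `U` with the topology generated by `{A | A ⊆ W}`, `W` relatively open),
(C1) each `C x y` is convex, (C2) each `C x y` is minimal among the connected subsets of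
`U` containing `x` and `y`, and (C3) `U` has a basis of convex (relatively) open sets.
Since `U` is required to be open in `Y`, relatively open subsets of `U` are exactly the
open subsets of `Y` contained in `U`. -/
structure IsConvexitySpaceOn {Y : Type*} [TopologicalSpace Y] (U : Set Y)
    (C : Y → Y → Set Y) : Prop where
  /-- The carrier is open in the ambient space. -/
  isOpen : IsOpen U
  /-- `U` is Hausdorff in its subspace topology. -/
  t2 : ∀ x ∈ U, ∀ y ∈ U, x ≠ y →
    ∃ V W : Set Y, IsOpen V ∧ IsOpen W ∧ x ∈ V ∧ y ∈ W ∧ V ∩ W ∩ U = ∅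
  /-- `C x y` is a subset of `U` for `x, y ∈ U`. -/
  segment_subset : ∀ x ∈ U, ∀ y ∈ U, C x y ⊆ U
  /-- `C x y` contains `x`. -/
  mem_left : ∀ x ∈ U, ∀ y ∈ U, x ∈ C x y
  /-- `C x y` contains `y`. -/
  mem_right : ∀ x ∈ U, ∀ y ∈ U, y ∈ C x y
  /-- `C x y` is connected. -/
  preconnected : ∀ x ∈ U, ∀ y ∈ U, IsPreconnected (C x y)
  /-- (C1): `C x y` is convex. -/
  convex : ∀ x ∈ U, ∀ y ∈ U, ∀ u ∈ C x y, ∀ v ∈ C x y, C u v ⊆ C x y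
  /-- (C2): `C x y` is minimal among the connected subsets of `U` containing `x, y`. -/
  minimal : ∀ x ∈ U, ∀ y ∈ U, ∀ A : Set Y, A ⊆ C x y → x ∈ A → y ∈ A →
    IsPreconnected A → A = C x y
  /-- Continuity of `(x, y) ↦ C x y`. -/
  continuity : ∀ x ∈ U, ∀ y ∈ U, ∀ W : Set Y, IsOpen W → C x y ⊆ W →
    ∃ V V' : Set Y, IsOpen V ∧ IsOpen V' ∧ x ∈ V ∧ y ∈ V' ∧
      ∀ x' ∈ V ∩ U, ∀ y' ∈ V' ∩ U, C x' y' ⊆ W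
  /-- (C3): `U` has a basis of convex open sets. -/
  basis : ∀ x ∈ U, ∀ W : Set Y, IsOpen W → x ∈ W →
    ∃ V : Set Y, IsOpen V ∧ x ∈ V ∧ V ⊆ W ∩ U ∧ ∀ u ∈ V, ∀ v ∈ V, C u v ⊆ V

/-- A *local convexity structure* on a topological space `Y`: an open cover `atlas` of `Y`
by convexity spaces (chart `U` carrying the convexity map `seg U`) such that every convex
open subspace of a chart is again a chart, with the restricted convexity map. -/
structure LocalConvexityStructure (Y : Type*) [TopologicalSpace Y] where
  /-- The charts. -/
  atlas : Set (Set Y)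
  /-- The convexity map of each chart: `seg U x y` is the minimal connected subset of the
  chart `U` joining `x` and `y`. -/
  seg : Set Y → Y → Y → Set Y
  /-- The charts cover `Y`. -/
  covers : ∀ y : Y, ∃ U ∈ atlas, y ∈ U
  /-- Each chart is a convexity space. -/
  convexity : ∀ U ∈ atlas, IsConvexitySpaceOn U (seg U)
  /-- Every convex open subspace of a chart is a chart, with the restricted map. -/
  subchart : ∀ U ∈ atlas, ∀ V : Set Y, V ⊆ U → IsOpen V →
    (∀ u ∈ V, ∀ v ∈ V, seg U u v ⊆ V) →
    V ∈ atlas ∧ ∀ u ∈ V, ∀ v ∈ V, seg V u v = seg U u v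

/-- A subset `A ⊆ Y` is convex (w.r.t. a local convexity structure) if `A ∩ U` is convex
in `U` for every chart `U`. -/
def LocalConvexityStructure.IsConvexSet {Y : Type*} [TopologicalSpace Y]
    (𝒱 : LocalConvexityStructure Y) (A : Set Y) : Prop :=
  ∀ U ∈ 𝒱.atlas, ∀ u ∈ A ∩ U, ∀ v ∈ A ∩ U, 𝒱.seg U u v ⊆ A ∩ U

/-- The convex hull of `A ⊆ Y`: the smallest convex set containing `A`. -/
def LocalConvexityStructure.hull {Y : Type*} [TopologicalSpace Y]
    (𝒱 : LocalConvexityStructure Y) (A : Set Y) : Set Y :=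
  ⋂₀ {B : Set Y | A ⊆ B ∧ 𝒱.IsConvexSet B}

/-- `U` is a member of `𝒱_e` with target chart `V`: `U` is an open subset of `Z` mapped by
`e` homeomorphically (injectively and relatively openly; `e` is continuous in context)
onto a convex subspace of the chart `V` of `Y`. -/
def IsEtaleChartTo {Z Y : Type*} [TopologicalSpace Z] [TopologicalSpace Y]
    (𝒱 : LocalConvexityStructure Y) (e : Z → Y) (U : Set Z) (V : Set Y) : Prop :=
  IsOpen U ∧ Set.InjOn e U ∧
  (∀ W : Set Z, W ⊆ U → IsOpen W → ∃ O : Set Y, IsOpen O ∧ e '' W = O ∩ e '' U) ∧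
  V ∈ 𝒱.atlas ∧ e '' U ⊆ V ∧
  ∀ p ∈ e '' U, ∀ q ∈ e '' U, 𝒱.seg V p q ⊆ e '' U

/-- `U ∈ 𝒱_e`: `U` is an open subset of `Z` mapped by `e` homeomorphically onto a convex
subspace of some chart of `Y`. -/
def IsEtaleChart {Z Y : Type*} [TopologicalSpace Z] [TopologicalSpace Y]
    (𝒱 : LocalConvexityStructure Y) (e : Z → Y) (U : Set Z) : Prop :=
  ∃ V : Set Y, IsEtaleChartTo 𝒱 e U V

/-- A continuous map `e : Z → Y` from a connected space `Z` is *étale* (w.r.t. a local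
convexity structure on `Y`) if `e` is closed and the charts `𝒱_e` cover `Z`. -/
structure IsEtale {Z Y : Type*} [TopologicalSpace Z] [TopologicalSpace Y]
    (𝒱 : LocalConvexityStructure Y) (e : Z → Y) : Prop where
  continuous : Continuous e
  connectedSpace : ConnectedSpace Z
  isClosedMap : IsClosedMap e
  charts_cover : ∀ z : Z, ∃ U : Set Z, IsEtaleChart 𝒱 e U ∧ z ∈ U

/-- `e : Z → Y` is *generated* by `F ⊆ Z` if there is no proper closed connected subset
`A ⊊ Z` containing `F` such that `e(U ∩ A)` is convex for all `U ∈ 𝒱_e`. -/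
def Generates {Z Y : Type*} [TopologicalSpace Z] [TopologicalSpace Y]
    (𝒱 : LocalConvexityStructure Y) (e : Z → Y) (F : Set Z) : Prop :=
  ¬ ∃ A : Set Z, A ≠ Set.univ ∧ IsClosed A ∧ IsPreconnected A ∧ F ⊆ A ∧
      ∀ U : Set Z, IsEtaleChart 𝒱 e U → 𝒱.IsConvexSet (e '' (U ∩ A))

/-- A *geodesic manifold*: a Hausdorff space `Y` with a local convexity structure such that
(G1) the closure of the convex hull of every finite set is compact, and (G2) for every
étale map `e : Z → Y` with `Z` compact that is generated by a two-element set
`{x, y} ⊆ Z`, every connected subset of `Z` containing `x` and `y` is all of `Z`. -/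
structure IsGeodesicManifold {Y : Type v} [TopologicalSpace Y]
    (𝒱 : LocalConvexityStructure Y) : Prop where
  t2 : T2Space Y
  /-- (G1). -/
  hull_compact : ∀ F : Set Y, F.Finite → IsCompact (closure (𝒱.hull F))
  /-- (G2). -/
  geodesic_minimal : ∀ (Z : Type v) [TopologicalSpace Z] (e : Z → Y),
    CompactSpace Z → IsEtale 𝒱 e → ∀ x y : Z, Generates 𝒱 e {x, y} →
    ∀ A : Set Z, IsPreconnected A → x ∈ A → y ∈ A → A = Set.univ

/-- Star-finiteness of the convexity space `(U, C)` (relative to the ambient space `Y`,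
`U` being open in `Y`): every closed star in `U` has a finite end set.  A star with center
`x ∈ U` and end set `E ⊆ U \ {x}` is the union `S = ⋃ z ∈ E, C x z` where the segments
`C x z` pairwise intersect exactly in `{x}` and the subspace topology of `S` is the finest
topology making all inclusions `C x z ↪ S` continuous (i.e. every `Z ⊆ S` whose trace on
each `C x z` is closed in `C x z` is closed in `S`); the star is closed if `S` is closed
in `U`. -/
def StarFiniteOn {Y : Type*} [TopologicalSpace Y] (U : Set Y) (C : Y → Y → Set Y) : Prop :=
  ∀ x ∈ U, ∀ E : Set Y, E ⊆ U \ {x} →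
    (∀ z ∈ E, ∀ z' ∈ E, z ≠ z' → C x z ∩ C x z' = {x}) →
    (∀ Z : Set Y, Z ⊆ (⋃ z ∈ E, C x z) →
      (∀ z ∈ E, ∃ F : Set Y, IsClosed F ∧ Z ∩ C x z = F ∩ C x z) →
      ∃ F : Set Y, IsClosed F ∧ Z = F ∩ (⋃ z ∈ E, C x z)) →
    (∃ F : Set Y, IsClosed F ∧ (⋃ z ∈ E, C x z) = F ∩ U) →
    E.Finite

/-- A *geodesic q-manifold*: a geodesic manifold all of whose charts are star-finite and
regular (as subspaces). -/
structure IsGeodesicQManifold {Y : Type v} [TopologicalSpace Y]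
    (𝒱 : LocalConvexityStructure Y) extends IsGeodesicManifold 𝒱 : Prop where
  starFinite : ∀ U ∈ 𝒱.atlas, StarFiniteOn U (𝒱.seg U)
  regular : ∀ U ∈ 𝒱.atlas, RegularSpace U

/-- A *geodesic* in `Y` joining `p` and `q`: an étale map `e : Z → Y` with `Z` compact,
generated by a two-element set `{x, y} ⊆ Z`, whose end points are `e x = p` and
`e y = q`. -/
structure GeodesicConnecting {Y : Type v} [TopologicalSpace Y]
    (𝒱 : LocalConvexityStructure Y) (p q : Y) : Type (v + 1) where
  Z : Type v
  [ts : TopologicalSpace Z]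
  e : Z → Y
  x : Z
  y : Z
  compact : CompactSpace Z
  etale : IsEtale 𝒱 e
  generates : Generates 𝒱 e {x, y}
  endpoint_left : e x = p
  endpoint_right : e y = q

/-- A subset `A ⊆ Y` is *weakly convex* if any two of its points are the end points of a
geodesic in `Y`. -/
def LocalConvexityStructure.WeaklyConvex {Y : Type v} [TopologicalSpace Y]
    (𝒱 : LocalConvexityStructure Y) (A : Set Y) : Prop :=
  ∀ p ∈ A, ∀ q ∈ A, Nonempty (GeodesicConnecting 𝒱 p q)

/-- A continuous map `f : X → Y` is *locally open onto its image* if every `x ∈ X` has an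
open neighbourhood `U` such that the induced map `U → f(U)` is open, where `f(U)` carries
the subspace topology from `Y` (equivalently: the image of every open `W ⊆ U` is
relatively open in `f(U)`). -/
def IsLocallyOpenOntoImage {X Y : Type*} [TopologicalSpace X] [TopologicalSpace Y]
    (f : X → Y) : Prop :=
  ∀ x : X, ∃ U : Set X, IsOpen U ∧ x ∈ U ∧
    ∀ W : Set X, W ⊆ U → IsOpen W → ∃ O : Set Y, IsOpen O ∧ f '' W = O ∩ f '' U

/-- The equivalence relation on `X` identifying `x` and `x'` iff `f x = f x'` and the image
filters `f(𝓝 x)` and `f(𝓝 x')` coincide. -/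
def nhdsSetoid {X Y : Type*} [TopologicalSpace X] (f : X → Y) : Setoid X where
  r a b := f a = f b ∧ Filter.map f (nhds a) = Filter.map f (nhds b)
  iseqv := ⟨fun _ => ⟨rfl, rfl⟩, fun h => ⟨h.1.symm, h.2.symm⟩,
    fun h h' => ⟨h.1.trans h'.1, h.2.trans h'.2⟩⟩

/-- The space `X^f`: the quotient of `X` by the relation `x ~ x'` iff `f x = f x'` and
`f(𝓝 x) = f(𝓝 x')`, endowed with the quotient topology. -/
abbrev SpaceXf {X Y : Type*} [TopologicalSpace X] (f : X → Y) : Type _ :=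
  Quotient (nhdsSetoid f)

/-- The canonical quotient map `q^f : X → X^f`. -/
def qMap {X Y : Type*} [TopologicalSpace X] (f : X → Y) : X → SpaceXf f :=
  Quotient.mk (nhdsSetoid f)

/-- The induced map `f# : X^f → Y` with `f = f# ∘ q^f`. -/
def fSharp {X Y : Type*} [TopologicalSpace X] (f : X → Y) : SpaceXf f → Y :=
  Quotient.lift f fun _ _ h => h.1

/-- A continuous map `f : X → Y` into a space with a local convexity structure `𝒱` is
*locally convex* if every `x ∈ X` has an open neighbourhood `U` such that the induced map
`U → f(U)` is open and `f(U)` is a convex subspace of some chart `V ∈ 𝒱`. -/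
def IsLocallyConvexMap {X Y : Type*} [TopologicalSpace X] [TopologicalSpace Y]
    (𝒱 : LocalConvexityStructure Y) (f : X → Y) : Prop :=
  ∀ x : X, ∃ U : Set X, IsOpen U ∧ x ∈ U ∧
    (∀ W : Set X, W ⊆ U → IsOpen W → ∃ O : Set Y, IsOpen O ∧ f '' W = O ∩ f '' U) ∧
    ∃ V ∈ 𝒱.atlas, f '' U ⊆ V ∧ ∀ p ∈ f '' U, ∀ q ∈ f '' U, 𝒱.seg V p q ⊆ f '' U

section TopHelpers

open Set

variable {α : Type*} [TopologicalSpace α]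

lemma not_preconnected_pair [T2Space α] {a b : α} (hab : a ≠ b) :
    ¬ IsPreconnected ({a, b} : Set α) := by
  intro h
  obtain ⟨U, W, hU, hW, haU, hbW, hUW⟩ := t2_separation hab
  have hcov : ({a, b} : Set α) ⊆ U ∪ W := by
    rintro x (rfl | rfl)
    · exact Or.inl haU
    · exact Or.inr hbW
  obtain ⟨w, -, hw⟩ := h U W hU hW hcov ⟨a, by simp, haU⟩ ⟨b, by simp, hbW⟩
  exact absurd (hUW.le_bot hw) (by simp)

/-- Classical "half plus cut point" lemma: if `s` is preconnected, `x ∈ s`,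
and `U₁, U₂` are open sets covering `s \ {x}` with empty triple intersection,
then `(s ∩ U₁) ∪ {x}` is preconnected. -/
lemma isPreconnected_half {s : Set α} (hs : IsPreconnected s) {x : α} (hx : x ∈ s)
    {U₁ U₂ : Set α} (h1 : IsOpen U₁) (h2 : IsOpen U₂)
    (hcov : s \ {x} ⊆ U₁ ∪ U₂) (hdisj : (s \ {x}) ∩ (U₁ ∩ U₂) = ∅) :
    IsPreconnected ((s ∩ U₁) ∪ {x}) := by
  set T : Set α := (s ∩ U₁) ∪ {x} with hT
  have hxT : x ∈ T := Or.inr rfl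
  have key : ∀ A B : Set α, IsOpen A → IsOpen B → T ⊆ A ∪ B → x ∈ A →
      (T ∩ B).Nonempty → (T ∩ (A ∩ B)).Nonempty := by
    intro A B hA hB hTAB hxA ⟨b0, hb0T, hb0B⟩
    by_cases hxB : x ∈ B
    · exact ⟨x, hxT, hxA, hxB⟩
    have hb0x : b0 ≠ x := fun h => hxB (h ▸ hb0B)
    have hb0sU : b0 ∈ s ∩ U₁ := hb0T.resolve_right hb0x
    have hscov : s ⊆ (A ∪ U₂) ∪ (B ∩ U₁) := by
      intro y hy
      by_cases hyx : y = x
      · exact Or.inl (Or.inl (hyx ▸ hxA))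
      · rcases hcov ⟨hy, hyx⟩ with hyU1 | hyU2
        · have hyT : y ∈ T := Or.inl ⟨hy, hyU1⟩
          rcases hTAB hyT with hyA | hyB
          · exact Or.inl (Or.inl hyA)
          · exact Or.inr ⟨hyB, hyU1⟩
        · exact Or.inl (Or.inr hyU2)
    obtain ⟨w, hws, hw⟩ := hs (A ∪ U₂) (B ∩ U₁) (hA.union h2) (hB.inter h1) hscov
      ⟨x, hx, Or.inl hxA⟩ ⟨b0, hb0sU.1, hb0B, hb0sU.2⟩
    obtain ⟨hwAU2, hwB, hwU1⟩ := hw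
    rcases hwAU2 with hwA | hwU2
    · exact ⟨w, Or.inl ⟨hws, hwU1⟩, hwA, hwB⟩
    · exfalso
      have hwx : w ≠ x := fun h => hxB (h ▸ hwB)
      have : w ∈ (s \ {x}) ∩ (U₁ ∩ U₂) := ⟨⟨hws, hwx⟩, hwU1, hwU2⟩
      rw [hdisj] at this
      exact this
  intro A B hA hB hTAB hTA hTB
  rcases hTAB hxT with hxA | hxB
  · exact key A B hA hB hTAB hxA hTB
  · obtain ⟨w, hwT, hwB, hwA⟩ := key B A hB hA (by rwa [Set.union_comm]) hxB hTA
    exact ⟨w, hwT, hwA, hwB⟩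

/-- Directed intersections of compact closed preconnected nonempty sets in a T2 space
are preconnected. -/
lemma isPreconnected_iInter_directed [T2Space α] {ι : Type*} [Nonempty ι] {T : ι → Set α}
    (hdir : Directed (· ⊇ ·) T) (hcpt : ∀ i, IsCompact (T i)) (hcl : ∀ i, IsClosed (T i))
    (hpc : ∀ i, IsPreconnected (T i)) (hne : ∀ i, (T i).Nonempty) :
    IsPreconnected (⋂ i, T i) := by
  set N : Set α := ⋂ i, T i with hN
  have hNcl : IsClosed N := isClosed_iInter hcl
  have i0 : ι := Classical.arbitrary ι
  have hNcpt : IsCompact N := (hcpt i0).of_isClosed_subset hNcl (iInter_subset _ _)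
  intro u v hu hv hcov hNu hNv
  by_contra hempty
  rw [Set.not_nonempty_iff_eq_empty] at hempty
  set P₁ : Set α := N \ v with hP₁
  set P₂ : Set α := N \ u with hP₂
  have hP₁cpt : IsCompact P₁ := hNcpt.of_isClosed_subset (hNcl.sdiff hv) diff_subset
  have hP₂cpt : IsCompact P₂ := hNcpt.of_isClosed_subset (hNcl.sdiff hu) diff_subset
  have hdisjP : Disjoint P₁ P₂ := by
    rw [Set.disjoint_left]
    rintro w ⟨hwN, hwv⟩ ⟨-, hwu⟩
    rcases hcov hwN with h | h
    exacts [hwu h, hwv h]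
  obtain ⟨a, haN, hau⟩ := hNu
  obtain ⟨b, hbN, hbv⟩ := hNv
  have haP₁ : a ∈ P₁ := ⟨haN, fun hav => by
    have : a ∈ N ∩ (u ∩ v) := ⟨haN, hau, hav⟩
    rw [hempty] at this; exact this⟩
  have hbP₂ : b ∈ P₂ := ⟨hbN, fun hbu => by
    have : b ∈ N ∩ (u ∩ v) := ⟨hbN, hbu, hbv⟩
    rw [hempty] at this; exact this⟩
  obtain ⟨G₁, G₂, hG₁, hG₂, hPG₁, hPG₂, hG⟩ :=
    SeparatedNhds.of_isCompact_isCompact hP₁cpt hP₂cpt hdisjP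
  have hNsub : N ⊆ G₁ ∪ G₂ := by
    intro w hwN
    by_cases hwu : w ∈ u
    · by_cases hwv : w ∈ v
      · exfalso
        have : w ∈ N ∩ (u ∩ v) := ⟨hwN, hwu, hwv⟩
        rw [hempty] at this; exact this
      · exact Or.inl (hPG₁ ⟨hwN, hwv⟩)
    · exact Or.inr (hPG₂ ⟨hwN, hwu⟩)
  -- find some i with T i ⊆ G₁ ∪ G₂
  have hK : ∃ i, T i ⊆ G₁ ∪ G₂ := by
    by_contra hK
    push_neg at hK
    have hKne : ∀ i, (T i \ (G₁ ∪ G₂)).Nonempty := by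
      intro i
      obtain ⟨w, hw1, hw2⟩ := Set.not_subset.mp (hK i)
      exact ⟨w, hw1, hw2⟩
    have hdir' : Directed (· ⊇ ·) (fun i => T i \ (G₁ ∪ G₂)) := by
      intro i j
      obtain ⟨k, hk1, hk2⟩ := hdir i j
      exact ⟨k, diff_subset_diff_left hk1, diff_subset_diff_left hk2⟩
    have := IsCompact.nonempty_iInter_of_directed_nonempty_isCompact_isClosed
      (fun i => T i \ (G₁ ∪ G₂)) hdir' hKne
      (fun i => (hcpt i).of_isClosed_subset ((hcl i).sdiff (hG₁.union hG₂)) diff_subset)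
      (fun i => (hcl i).sdiff (hG₁.union hG₂))
    obtain ⟨w, hw⟩ := this
    rw [Set.mem_iInter] at hw
    have hwN : w ∈ N := mem_iInter.2 fun i => (hw i).1
    exact (hw i0).2 (hNsub hwN)
  obtain ⟨i, hi⟩ := hK
  obtain ⟨w, -, hw⟩ := hpc i G₁ G₂ hG₁ hG₂ hi
    ⟨a, (iInter_subset T i) haN, hPG₁ haP₁⟩ ⟨b, (iInter_subset T i) hbN, hPG₂ hbP₂⟩
  exact absurd (hG.le_bot hw) (by simp)

lemma exists_isClopen_not_mem [T2Space α] [CompactSpace α] {a b : α}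
    (h : b ∉ connectedComponent a) : ∃ D : Set α, IsClopen D ∧ a ∈ D ∧ b ∉ D := by
  rw [connectedComponent_eq_iInter_isClopen] at h
  simp only [Set.mem_iInter] at h
  push_neg at h
  obtain ⟨⟨D, hD, haD⟩, hbD⟩ := h
  exact ⟨D, hD, haD, hbD⟩

lemma mem_closure_diff_singleton {T : Set α} (hT : IsPreconnected T) {x y : α}
    (hx : x ∈ T) (hy : y ∈ T) (hxy : y ≠ x) [T1Space α] : x ∈ closure (T \ {x}) := by
  by_contra hcl
  obtain ⟨w, hwT, hw1, hw2⟩ := hT (closure (T \ {x}))ᶜ ({x}ᶜ)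
    (isClosed_closure.isOpen_compl) isOpen_compl_singleton
    (by
      intro t ht
      by_cases htx : t = x
      · exact Or.inl (htx ▸ hcl)
      · exact Or.inr htx)
    ⟨x, hx, hcl⟩ ⟨y, hy, hxy⟩
  exact hw1 (subset_closure ⟨hwT, hw2⟩)

end TopHelpers
section HullLemmas

open Set

variable {Y : Type v} [TopologicalSpace Y]

lemma subset_hull (𝒱 : LocalConvexityStructure Y) (F : Set Y) : F ⊆ 𝒱.hull F :=
  fun _ hx => Set.mem_sInter.2 fun _ hB => hB.1 hx

lemma hull_min {𝒱 : LocalConvexityStructure Y} {F B : Set Y} (hFB : F ⊆ B)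
    (hB : 𝒱.IsConvexSet B) : 𝒱.hull F ⊆ B :=
  Set.sInter_subset_of_mem ⟨hFB, hB⟩

lemma isConvexSet_hull (𝒱 : LocalConvexityStructure Y) (F : Set Y) :
    𝒱.IsConvexSet (𝒱.hull F) := by
  intro V hV u hu v hv
  intro x hx
  have hC := 𝒱.convexity V hV
  refine ⟨Set.mem_sInter.2 fun B hB => ?_, hC.segment_subset u hu.2 v hv.2 hx⟩
  exact (hB.2 V hV u ⟨Set.mem_sInter.1 hu.1 B hB, hu.2⟩ v ⟨Set.mem_sInter.1 hv.1 B hB, hv.2⟩ hx).1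

lemma seg_self' {V : Set Y} {C : Y → Y → Set Y} (hC : IsConvexitySpaceOn V C) {a : Y}
    (ha : a ∈ V) : C a a = {a} :=
  (hC.minimal a ha a ha {a} (Set.singleton_subset_iff.2 (hC.mem_left a ha a ha)) rfl rfl
    isPreconnected_singleton).symm

lemma isConvexSet_singleton (𝒱 : LocalConvexityStructure Y) (p : Y) :
    𝒱.IsConvexSet {p} := by
  intro V hV u hu v hv
  have hu' : u = p := hu.1
  have hv' : v = p := hv.1
  subst hu'; subst hv'
  rw [seg_self' (𝒱.convexity V hV) hu.2]
  exact Set.singleton_subset_iff.2 ⟨rfl, hu.2⟩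

lemma hull_singleton (𝒱 : LocalConvexityStructure Y) (p : Y) : 𝒱.hull {p} = {p} :=
  Set.Subset.antisymm (hull_min subset_rfl (isConvexSet_singleton 𝒱 p)) (subset_hull 𝒱 _)

end HullLemmas

section OrderTheory

open Set

variable {Y : Type v} [TopologicalSpace Y]
variable {V : Set Y} {C : Y → Y → Set Y} (hC : IsConvexitySpaceOn V C)
variable {a b : Y}

include hC

/-- (O2): splitting a segment at an interior point. -/
lemma seg_split (ha : a ∈ V) (hb : b ∈ V) {w : Y} (hw : w ∈ C a b) : C a w ∪ C w b = C a b := by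
  have hwV : w ∈ V := hC.segment_subset a ha b hb hw
  refine hC.minimal a ha b hb (C a w ∪ C w b) ?_ ?_ ?_ ?_
  · exact Set.union_subset (hC.convex a ha b hb a (hC.mem_left a ha b hb) w hw)
      (hC.convex a ha b hb w hw b (hC.mem_right a ha b hb))
  · exact Or.inl (hC.mem_left a ha w hwV)
  · exact Or.inr (hC.mem_right w hwV b hb)
  · exact IsPreconnected.union w (hC.mem_right a ha w hwV) (hC.mem_left w hwV b hb)
      (hC.preconnected a ha w hwV) (hC.preconnected w hwV b hb)

/-- Core lemma: an interior point of a segment cannot be a (left) endpoint of the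
same segment with the same right endpoint. -/
lemma seg_core_left {c d w : Y} (hc : c ∈ V) (hd : d ∈ V) (hw : w ∈ C c d)
    (hwc : w ≠ c) (hwd : w ≠ d) (heq : C c d = C w d) : False := by
  have hwV : w ∈ V := hC.segment_subset c hc d hd hw
  have hnp : ¬ IsPreconnected (C c d \ {w}) := by
    intro hp
    have := hC.minimal c hc d hd (C c d \ {w}) diff_subset
      ⟨hC.mem_left c hc d hd, fun h => hwc (by simpa using h.symm)⟩
      ⟨hC.mem_right c hc d hd, fun h => hwd (by simpa using h.symm)⟩ hp
    rw [← this] at hw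
    exact hw.2 rfl
  rw [IsPreconnected] at hnp
  push_neg at hnp
  obtain ⟨U₁, U₂, hU₁, hU₂, hcov, hm₁, hm₂, hempty⟩ := hnp
  -- d is in U₁ or U₂
  have hdmem : d ∈ C c d \ {w} := ⟨hC.mem_right c hc d hd, fun h => hwd (by simpa using h.symm)⟩
  have main : ∀ W₁ W₂ : Set Y, IsOpen W₁ → IsOpen W₂ → C c d \ {w} ⊆ W₁ ∪ W₂ →
      ((C c d \ {w}) ∩ W₁).Nonempty → ((C c d \ {w}) ∩ W₂).Nonempty →
      (C c d \ {w}) ∩ (W₁ ∩ W₂) = ∅ → d ∈ W₁ → False := by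
    intro W₁ W₂ hW₁ hW₂ hcov' hm₁' hm₂' hempty' hdW₁
    have hhalf : IsPreconnected ((C c d ∩ W₁) ∪ {w}) :=
      isPreconnected_half (hC.preconnected c hc d hd) hw hW₁ hW₂ hcov' hempty'
    have hsub : (C c d ∩ W₁) ∪ {w} ⊆ C w d := by
      rw [← heq]
      exact Set.union_subset (Set.inter_subset_left) (Set.singleton_subset_iff.2 hw)
    have hfin := hC.minimal w hwV d hd ((C c d ∩ W₁) ∪ {w}) hsub
      (Or.inr rfl) (Or.inl ⟨hC.mem_right c hc d hd, hdW₁⟩) hhalf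
    obtain ⟨y, hy, hyW₂⟩ := hm₂'
    have hyP : y ∈ (C c d ∩ W₁) ∪ {w} := by rw [hfin, ← heq]; exact hy.1
    rcases hyP with hyP | hyP
    · have : y ∈ (C c d \ {w}) ∩ (W₁ ∩ W₂) := ⟨hy, hyP.2, hyW₂⟩
      rw [hempty'] at this; exact this
    · exact hy.2 hyP
  rcases hcov hdmem with hd1 | hd2
  · exact main U₁ U₂ hU₁ hU₂ hcov hm₁ hm₂ hempty hd1
  · exact main U₂ U₁ hU₂ hU₁ (by rwa [Set.union_comm]) hm₂ hm₁
      (by rwa [Set.inter_comm U₂ U₁]) hd2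

/-- Core lemma, right version. -/
lemma seg_core_right {c d w : Y} (hc : c ∈ V) (hd : d ∈ V) (hw : w ∈ C c d)
    (hwc : w ≠ c) (hwd : w ≠ d) (heq : C c d = C c w) : False := by
  have hwV : w ∈ V := hC.segment_subset c hc d hd hw
  have hnp : ¬ IsPreconnected (C c d \ {w}) := by
    intro hp
    have := hC.minimal c hc d hd (C c d \ {w}) diff_subset
      ⟨hC.mem_left c hc d hd, fun h => hwc (by simpa using h.symm)⟩
      ⟨hC.mem_right c hc d hd, fun h => hwd (by simpa using h.symm)⟩ hp
    rw [← this] at hw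
    exact hw.2 rfl
  rw [IsPreconnected] at hnp
  push_neg at hnp
  obtain ⟨U₁, U₂, hU₁, hU₂, hcov, hm₁, hm₂, hempty⟩ := hnp
  have hcmem : c ∈ C c d \ {w} := ⟨hC.mem_left c hc d hd, fun h => hwc (by simpa using h.symm)⟩
  have main : ∀ W₁ W₂ : Set Y, IsOpen W₁ → IsOpen W₂ → C c d \ {w} ⊆ W₁ ∪ W₂ →
      ((C c d \ {w}) ∩ W₁).Nonempty → ((C c d \ {w}) ∩ W₂).Nonempty →
      (C c d \ {w}) ∩ (W₁ ∩ W₂) = ∅ → c ∈ W₁ → False := by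
    intro W₁ W₂ hW₁ hW₂ hcov' hm₁' hm₂' hempty' hcW₁
    have hhalf : IsPreconnected ((C c d ∩ W₁) ∪ {w}) :=
      isPreconnected_half (hC.preconnected c hc d hd) hw hW₁ hW₂ hcov' hempty'
    have hsub : (C c d ∩ W₁) ∪ {w} ⊆ C c w := by
      rw [← heq]
      exact Set.union_subset (Set.inter_subset_left) (Set.singleton_subset_iff.2 hw)
    have hfin := hC.minimal c hc w hwV ((C c d ∩ W₁) ∪ {w}) hsub
      (Or.inl ⟨hC.mem_left c hc d hd, hcW₁⟩) (Or.inr rfl) hhalf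
    obtain ⟨y, hy, hyW₂⟩ := hm₂'
    have hyP : y ∈ (C c d ∩ W₁) ∪ {w} := by rw [hfin, ← heq]; exact hy.1
    rcases hyP with hyP | hyP
    · have : y ∈ (C c d \ {w}) ∩ (W₁ ∩ W₂) := ⟨hy, hyP.2, hyW₂⟩
      rw [hempty'] at this; exact this
    · exact hy.2 hyP
  rcases hcov hcmem with hc1 | hc2
  · exact main U₁ U₂ hU₁ hU₂ hcov hm₁ hm₂ hempty hc1
  · exact main U₂ U₁ hU₂ hU₁ (by rwa [Set.union_comm]) hm₂ hm₁
      (by rwa [Set.inter_comm U₂ U₁]) hc2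

variable {s t x : Y}

/-- Antisymmetry (left): `s ≤ t ∧ t ≤ s → s = t` where `x ≤ y ↔ x ∈ C a y`. -/
lemma seg_antisymm_left (ha : a ∈ V) (hb : b ∈ V) (hs : s ∈ C a b) (ht : t ∈ C a b)
    (h1 : s ∈ C a t) (h2 : t ∈ C a s) : s = t := by
  by_contra hst
  have hsV : s ∈ V := hC.segment_subset a ha b hb hs
  have htV : t ∈ V := hC.segment_subset a ha b hb ht
  have heq : C a s = C a t :=
    Set.Subset.antisymm (hC.convex a ha t htV a (hC.mem_left a ha t htV) s h1)
      (hC.convex a ha s hsV a (hC.mem_left a ha s hsV) t h2)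
  have hta : t ≠ a := by
    rintro rfl
    rw [seg_self' hC ha] at h1
    exact hst (by simpa using h1)
  exact seg_core_right hC ha hsV h2 hta (Ne.symm hst) heq

/-- Antisymmetry (right): with respect to the right endpoint `b`. -/
lemma seg_antisymm_right (ha : a ∈ V) (hb : b ∈ V) (hs : s ∈ C a b) (ht : t ∈ C a b)
    (h1 : s ∈ C t b) (h2 : t ∈ C s b) : s = t := by
  by_contra hst
  have hsV : s ∈ V := hC.segment_subset a ha b hb hs
  have htV : t ∈ V := hC.segment_subset a ha b hb ht
  have heq : C s b = C t b :=
    Set.Subset.antisymm (hC.convex t htV b hb s h1 b (hC.mem_right t htV b hb))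
      (hC.convex s hsV b hb t h2 b (hC.mem_right s hsV b hb))
  have htb : t ≠ b := by
    rintro rfl
    rw [seg_self' hC hb] at h1
    exact hst (by simpa using h1)
  exact seg_core_left hC hsV hb h2 (Ne.symm hst) htb heq

/-- Duality forward: `t ∈ C s b → s ∈ C a t`. -/
lemma seg_dual_fwd (ha : a ∈ V) (hb : b ∈ V) (hs : s ∈ C a b) (ht : t ∈ C a b) (h : t ∈ C s b) : s ∈ C a t := by
  have hcases : s ∈ C a t ∪ C t b := by rw [seg_split hC ha hb ht]; exact hs
  rcases hcases with h' | h'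
  · exact h'
  · have := seg_antisymm_right hC ha hb hs ht h' h
    rw [this]
    exact hC.mem_right a ha t (hC.segment_subset a ha b hb ht)

/-- Duality backward: `s ∈ C a t → t ∈ C s b`. -/
lemma seg_dual_bwd (ha : a ∈ V) (hb : b ∈ V) (hs : s ∈ C a b) (ht : t ∈ C a b) (h : s ∈ C a t) : t ∈ C s b := by
  have hcases : t ∈ C a s ∪ C s b := by rw [seg_split hC ha hb hs]; exact ht
  rcases hcases with h' | h'
  · have := seg_antisymm_left hC ha hb hs ht h h'
    rw [← this]
    exact hC.mem_left s (hC.segment_subset a ha b hb hs) b hb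
  · exact h'

/-- Totality of the order. -/
lemma seg_total (ha : a ∈ V) (hb : b ∈ V) (hs : s ∈ C a b) (ht : t ∈ C a b) : t ∈ C a s ∨ s ∈ C a t := by
  have hcases : t ∈ C a s ∪ C s b := by rw [seg_split hC ha hb hs]; exact ht
  rcases hcases with h' | h'
  · exact Or.inl h'
  · exact Or.inr (seg_dual_fwd hC ha hb hs ht h')

/-- (A5) points between `s` and `t` lie on `C s t`. -/
lemma seg_mem_between (ha : a ∈ V) (hb : b ∈ V) (hs : s ∈ C a b) (ht : t ∈ C a b) (hx : x ∈ C a b)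
    (h1 : s ∈ C a x) (h2 : x ∈ C a t) : x ∈ C s t := by
  have hsV : s ∈ V := hC.segment_subset a ha b hb hs
  have htV : t ∈ V := hC.segment_subset a ha b hb ht
  have hxV : x ∈ V := hC.segment_subset a ha b hb hx
  have hxsb : x ∈ C s b := seg_dual_bwd hC ha hb hs hx h1
  have hst : s ∈ C a t :=
    hC.convex a ha t htV a (hC.mem_left a ha t htV) x h2 h1
  have htsb : t ∈ C s b := seg_dual_bwd hC ha hb hs ht hst
  have hcases : x ∈ C s t ∪ C t b := by rw [seg_split hC hsV hb htsb]; exact hxsb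
  rcases hcases with h' | h'
  · exact h'
  · have htax : t ∈ C a x := seg_dual_fwd hC ha hb ht hx h'
    have := seg_antisymm_left hC ha hb hx ht h2 htax
    rw [this]
    exact hC.mem_right s hsV t htV

/-- (A6) points of `C s t` are between `s` and `t`. -/
lemma seg_between_mem (ha : a ∈ V) (hb : b ∈ V) (hs : s ∈ C a b) (ht : t ∈ C a b) (hst : s ∈ C a t)
    (hx : x ∈ C s t) : s ∈ C a x ∧ x ∈ C a t := by
  have hsV : s ∈ V := hC.segment_subset a ha b hb hs
  have htV : t ∈ V := hC.segment_subset a ha b hb ht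
  have hxat : x ∈ C a t :=
    hC.convex a ha t htV s hst t (hC.mem_right a ha t htV) hx
  have hxab : x ∈ C a b :=
    hC.convex a ha b hb s hs t ht hx
  have htsb : t ∈ C s b := seg_dual_bwd hC ha hb hs ht hst
  have hxsb : x ∈ C s b :=
    hC.convex s hsV b hb s (hC.mem_left s hsV b hb) t htsb hx
  exact ⟨seg_dual_fwd hC ha hb hs hxab hxsb, hxat⟩

/-- (L2e): the closure of a subsegment meets the big segment only in itself. -/
lemma closure_seg_inter [T1Space Y] (ha : a ∈ V) (hb : b ∈ V) (hs : s ∈ C a b) (ht : t ∈ C a b) (hst : s ∈ C a t) :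
    closure (C s t) ∩ C a b ⊆ C s t := by
  rintro x ⟨hxcl, hxS⟩
  by_contra hx
  have hsV : s ∈ V := hC.segment_subset a ha b hb hs
  have htV : t ∈ V := hC.segment_subset a ha b hb ht
  have hxV : x ∈ V := hC.segment_subset a ha b hb hxS
  have hpos : ¬ (s ∈ C a x ∧ x ∈ C a t) := by
    intro ⟨h1, h2⟩
    exact hx (seg_mem_between hC ha hb hs ht hxS h1 h2)
  by_cases h1 : s ∈ C a x
  · have h2 : x ∉ C a t := fun h2 => hpos ⟨h1, h2⟩
    have htx : t ∈ C a x := (seg_total hC ha hb hxS ht).resolve_right h2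
    have hxt : x ≠ t := by
      rintro rfl
      exact h2 (hC.mem_right a ha x hxV)
    obtain ⟨W, hWo, hxW, hWsub, hWc⟩ := hC.basis x hxV {t}ᶜ isOpen_compl_singleton hxt
    obtain ⟨y, hyW, hyst⟩ := mem_closure_iff.mp hxcl W hWo hxW
    have hyab : y ∈ C a b := hC.convex a ha b hb s hs t ht hyst
    have hbtw := seg_between_mem hC ha hb hs ht hst hyst
    have : t ∈ C y x := seg_mem_between hC ha hb hyab hxS ht hbtw.2 htx
    exact (hWsub (hWc y hyW x hxW this)).1 rfl
  · have hxs : x ∈ C a s := (seg_total hC ha hb hs hxS).resolve_right h1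
    have hxsne : x ≠ s := by
      rintro rfl
      exact h1 (hC.mem_right a ha x hxV)
    obtain ⟨W, hWo, hxW, hWsub, hWc⟩ := hC.basis x hxV {s}ᶜ isOpen_compl_singleton hxsne
    obtain ⟨y, hyW, hyst⟩ := mem_closure_iff.mp hxcl W hWo hxW
    have hyab : y ∈ C a b := hC.convex a ha b hb s hs t ht hyst
    have hbtw := seg_between_mem hC ha hb hs ht hst hyst
    have : s ∈ C x y := seg_mem_between hC ha hb hxS hyab hs hxs hbtw.1
    exact (hWsub (hWc x hxW y hyW this)).1 rfl

end OrderTheory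
section SegClosed

open Set

variable {Y : Type v} [TopologicalSpace Y]

lemma isCompact_closure_seg (𝒱 : LocalConvexityStructure Y) (hY : IsGeodesicQManifold 𝒱)
    {V : Set Y} (hV : V ∈ 𝒱.atlas) {s t : Y} (hs : s ∈ V) (ht : t ∈ V) :
    IsCompact (closure (𝒱.seg V s t)) := by
  have h1 : 𝒱.seg V s t ⊆ 𝒱.hull {s, t} := by
    intro x hx
    exact (isConvexSet_hull 𝒱 {s, t} V hV s ⟨subset_hull 𝒱 _ (by simp), hs⟩
      t ⟨subset_hull 𝒱 _ (by simp), ht⟩ hx).1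
  exact (hY.hull_compact {s, t} ((Set.finite_singleton t).insert s)).of_isClosed_subset
    isClosed_closure (closure_mono h1)

lemma exists_convex_open_regular (𝒱 : LocalConvexityStructure Y)
    (hY : IsGeodesicQManifold 𝒱) {V : Set Y} (hV : V ∈ 𝒱.atlas)
    {r z : Y} (hr : r ∈ V) (hz : z ∈ V) (hzr : z ≠ r) :
    ∃ W : Set Y, IsOpen W ∧ r ∈ W ∧ W ⊆ V ∧ z ∉ closure W ∧
      ∀ u' ∈ W, ∀ v' ∈ W, 𝒱.seg V u' v' ⊆ W := by
  haveI hT2 : T2Space Y := hY.t2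
  haveI hreg : RegularSpace ↥V := hY.regular V hV
  have hC := 𝒱.convexity V hV
  set r' : ↥V := ⟨r, hr⟩
  set z' : ↥V := ⟨z, hz⟩
  have hz'cl : r' ∉ closure ({z'} : Set ↥V) := by
    rw [closure_singleton, Set.mem_singleton_iff]
    intro h
    exact hzr (congrArg Subtype.val h).symm
  have hdisj : Disjoint (nhds r') (nhdsSet ({z'} : Set ↥V)) :=
    disjoint_nhds_nhdsSet.mpr hz'cl
  rw [nhdsSet_singleton, Filter.disjoint_iff] at hdisj
  obtain ⟨A, hA, B, hB, hAB⟩ := hdisj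
  obtain ⟨A', hA'A, hA'o, hrA'⟩ := mem_nhds_iff.mp hA
  obtain ⟨B', hB'B, hB'o, hzB'⟩ := mem_nhds_iff.mp hB
  have hzclA' : z' ∉ closure A' := by
    intro h
    obtain ⟨w, hwB', hwA'⟩ := mem_closure_iff.mp h B' hB'o hzB'
    exact absurd (hAB.le_bot ⟨hA'A hwA', hB'B hwB'⟩) (by simp)
  obtain ⟨O, hOo, hOA⟩ := isOpen_induced_iff.mp hA'o
  have himg : Subtype.val '' A' = V ∩ O := by rw [← hOA]; exact Subtype.image_preimage_coe V O
  have hzclVO : z ∉ closure (V ∩ O) := by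
    intro h
    exact hzclA' (closure_subtype.mpr (by rwa [himg]))
  have hrVO : r ∈ V ∩ O := by
    refine ⟨hr, ?_⟩
    have : r' ∈ A' := hrA'
    rw [← hOA] at this
    exact this
  obtain ⟨W, hWo, hrW, hWsub, hWc⟩ :=
    hC.basis r hr (V ∩ O) (hC.isOpen.inter hOo) hrVO
  exact ⟨W, hWo, hrW, fun x hx => (hWsub hx).2, fun h => hzclVO (closure_mono
    (fun x hx => (hWsub hx).1) h), hWc⟩

end SegClosed
section SegClosedMain

open Set

variable {Y : Type v} [TopologicalSpace Y]

lemma seg_closed_aux (𝒱 : LocalConvexityStructure Y) (hY : IsGeodesicQManifold 𝒱)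
    {V : Set Y} (hV : V ∈ 𝒱.atlas) {a b : Y} (ha : a ∈ V) (hb : b ∈ V) {z : Y}
    (hzcl : z ∈ closure (𝒱.seg V a b)) (hzS : z ∉ 𝒱.seg V a b)
    (halt : z ∈ V ∨ ∀ y ∈ closure (𝒱.seg V a b), y ∈ V → y ∈ 𝒱.seg V a b) : False := by
  classical
  haveI hT2 : T2Space Y := hY.t2
  have hC := 𝒱.convexity V hV
  set L : Set Y := {s | s ∈ 𝒱.seg V a b ∧ z ∉ closure (𝒱.seg V a s)} with hLdef
  set R : Set Y := {s | s ∈ 𝒱.seg V a b ∧ z ∈ closure (𝒱.seg V a s)} with hRdef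
  have hmV : ∀ {s : Y}, s ∈ 𝒱.seg V a b → s ∈ V := fun {s} hs =>
    hC.segment_subset a ha b hb hs
  have haS : a ∈ 𝒱.seg V a b := hC.mem_left a ha b hb
  have hbS : b ∈ 𝒱.seg V a b := hC.mem_right a ha b hb
  have haL : a ∈ L := by
    refine ⟨haS, ?_⟩
    rw [seg_self' hC ha, closure_singleton, Set.mem_singleton_iff]
    intro h
    exact hzS (h ▸ haS)
  have hbR : b ∈ R := ⟨hbS, hzcl⟩
  have hLR : ∀ s ∈ 𝒱.seg V a b, s ∈ L ∨ s ∈ R := by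
    intro s hs
    by_cases h : z ∈ closure (𝒱.seg V a s)
    · exact Or.inr ⟨hs, h⟩
    · exact Or.inl ⟨hs, h⟩
  have hLnR : ∀ {s : Y}, s ∈ L → s ∈ R → False := fun {s} hL hR => hL.2 hR.2
  have hdown : ∀ s ∈ L, ∀ s' ∈ 𝒱.seg V a b, s' ∈ 𝒱.seg V a s → s' ∈ L := by
    intro s hs s' hs'S hs'le
    refine ⟨hs'S, fun h => hs.2 (closure_mono ?_ h)⟩
    exact hC.convex a ha s (hmV hs.1) a (hC.mem_left a ha s (hmV hs.1)) s' hs'le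
  have horder : ∀ s ∈ L, ∀ r ∈ R, s ∈ 𝒱.seg V a r := by
    intro s hs r hr
    refine (seg_total hC ha hb hs.1 hr.1).resolve_left fun h => ?_
    exact hLnR (hdown s hs r hr.1 h) hr
  -- shared separation contradiction
  have hsep : (∀ r' ∈ closure L, r' ∉ R) → (∀ l' ∈ L, l' ∉ closure R) → False := by
    intro hα hβ
    obtain ⟨w, hwS, hw1, hw2⟩ := hC.preconnected a ha b hb (closure R)ᶜ (closure L)ᶜ
      isClosed_closure.isOpen_compl isClosed_closure.isOpen_compl
      (by
        intro x hx
        rcases hLR x hx with hxL | hxR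
        · exact Or.inl (hβ x hxL)
        · exact Or.inr (fun hcl => hα x hcl hxR))
      ⟨a, haS, hβ a haL⟩ ⟨b, hbS, fun hcl => hα b hcl hbR⟩
    rcases hLR w hwS with hwL | hwR
    · exact hw2 (subset_closure hwL)
    · exact hw1 (subset_closure hwR)
  by_cases hmin : ∃ r₀ ∈ R, ∀ r ∈ R, r₀ ∈ 𝒱.seg V a r
  · obtain ⟨r₀, hr₀R, hr₀min⟩ := hmin
    have hr₀S : r₀ ∈ 𝒱.seg V a b := hr₀R.1
    have hr₀V : r₀ ∈ V := hmV hr₀S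
    have hzr₀ : z ≠ r₀ := fun h => hzS (h ▸ hr₀S)
    by_cases hmax : ∃ m ∈ L, ∀ s ∈ L, s ∈ 𝒱.seg V a m
    · -- both a max of L and a min of R : two-point segment, contradiction
      obtain ⟨m, hmL, hmmax⟩ := hmax
      have hmS : m ∈ 𝒱.seg V a b := hmL.1
      have hmV' : m ∈ V := hmV hmS
      have hmr : m ∈ 𝒱.seg V a r₀ := horder m hmL r₀ hr₀R
      have hmne : m ≠ r₀ := fun h => hLnR hmL (h ▸ hr₀R)
      have hsub : 𝒱.seg V m r₀ ⊆ {m, r₀} := by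
        intro x hx
        have hxS : x ∈ 𝒱.seg V a b := hC.convex a ha b hb m hmS r₀ hr₀S hx
        have hbtw := seg_between_mem hC ha hb hmS hr₀S hmr hx
        rcases hLR x hxS with hxL | hxR
        · exact Or.inl (seg_antisymm_left hC ha hb hxS hmS (hmmax x hxL) hbtw.1)
        · exact Or.inr (seg_antisymm_left hC ha hb hxS hr₀S hbtw.2 (hr₀min x hxR))
      have hP : 𝒱.seg V m r₀ = {m, r₀} := by
        refine Set.Subset.antisymm hsub ?_
        intro x hx
        rcases hx with h | h
        · rw [h]; exact hC.mem_left m hmV' r₀ hr₀V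
        · rw [Set.mem_singleton_iff] at h
          rw [h]; exact hC.mem_right m hmV' r₀ hr₀V
      have hpre := hC.preconnected m hmV' r₀ hr₀V
      rw [hP] at hpre
      exact not_preconnected_pair hmne hpre
    · -- min exists, no max : case (I)
      have hLle : ∀ s ∈ L, s ∈ 𝒱.seg V a r₀ := fun s hs => horder s hs r₀ hr₀R
      have key : ∀ s ∈ L, z ∈ closure (𝒱.seg V s r₀) := by
        intro s hs
        have hsplit := seg_split hC ha hr₀V (hLle s hs)
        have hz' : z ∈ closure (𝒱.seg V a s) ∪ closure (𝒱.seg V s r₀) := by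
          rw [← closure_union, hsplit]
          exact hr₀R.2
        exact hz'.resolve_left hs.2
      by_cases hracc : r₀ ∈ closure L
      · rcases halt with hzV | hnj
        · -- regularity argument
          obtain ⟨W, hWo, hr₀W, hWV, hzW, hWc⟩ :=
            exists_convex_open_regular 𝒱 hY hV hr₀V hzV hzr₀
          obtain ⟨l, hlW, hlL⟩ := mem_closure_iff.mp hracc W hWo hr₀W
          exact hzW (closure_mono (hWc l hlW r₀ hr₀W) (key l hlL))
        · -- T* continuum argument
          haveI : Nonempty ↥L := ⟨⟨a, haL⟩⟩
          set T : ↥L → Set Y := fun s => closure (𝒱.seg V s.1 r₀) with hTdef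
          have hmono : ∀ i j : ↥L, j.1 ∈ 𝒱.seg V a i.1 → T j ⊇ T i := by
            intro i j hji
            have hi' : i.1 ∈ 𝒱.seg V j.1 r₀ :=
              seg_mem_between hC ha hb j.2.1 hr₀S i.2.1 hji (hLle i.1 i.2)
            exact closure_mono (hC.convex j.1 (hmV j.2.1) r₀ hr₀V i.1 hi' r₀
              (hC.mem_right j.1 (hmV j.2.1) r₀ hr₀V))
          have hTdir : Directed (· ⊇ ·) T := by
            intro i j
            rcases seg_total hC ha hb i.2.1 j.2.1 with hji | hij
            · exact ⟨i, subset_rfl, hmono i j hji⟩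
            · exact ⟨j, hmono j i hij, subset_rfl⟩
          have hTcpt : ∀ i, IsCompact (T i) := fun i =>
            isCompact_closure_seg 𝒱 hY hV (hmV i.2.1) hr₀V
          have hTpc : ∀ i, IsPreconnected (T i) := fun i =>
            (hC.preconnected i.1 (hmV i.2.1) r₀ hr₀V).closure
          have hTne : ∀ i, (T i).Nonempty := fun i =>
            ⟨r₀, subset_closure (hC.mem_right i.1 (hmV i.2.1) r₀ hr₀V)⟩
          have hTpre := isPreconnected_iInter_directed hTdir hTcpt
            (fun _ => isClosed_closure) hTpc hTne
          have hzT : z ∈ ⋂ i, T i := Set.mem_iInter.2 fun i => key i.1 i.2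
          have hr₀T : r₀ ∈ ⋂ i, T i := Set.mem_iInter.2 fun i =>
            subset_closure (hC.mem_right i.1 (hmV i.2.1) r₀ hr₀V)
          have hTS : ∀ x ∈ (⋂ i, T i), x ∈ 𝒱.seg V a b → x = r₀ := by
            intro x hxT hxS
            have hall : ∀ s, ∀ hs : s ∈ L, s ∈ 𝒱.seg V a x := by
              intro s hs
              have hxst : x ∈ 𝒱.seg V s r₀ :=
                closure_seg_inter hC ha hb hs.1 hr₀S (hLle s hs)
                  ⟨Set.mem_iInter.1 hxT ⟨s, hs⟩, hxS⟩
              exact (seg_between_mem hC ha hb hs.1 hr₀S (hLle s hs) hxst).1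
            rcases hLR x hxS with hxL | hxR
            · exact absurd ⟨x, hxL, fun s hs => hall s hs⟩ hmax
            · have h1 : x ∈ 𝒱.seg V a r₀ :=
                closure_seg_inter hC ha hb haS hr₀S (hLle a haL)
                  ⟨Set.mem_iInter.1 hxT ⟨a, haL⟩, hxS⟩
              exact seg_antisymm_left hC ha hb hxS hr₀S h1 (hr₀min x hxR)
          have hjunk : (⋂ i, T i) \ {r₀} ⊆ Vᶜ := by
            rintro y ⟨hyT, hyne⟩ hyV
            have hyclS : y ∈ closure (𝒱.seg V a b) :=
              closure_mono (hC.convex a ha b hb a haS r₀ hr₀S)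
                (Set.mem_iInter.1 hyT ⟨a, haL⟩)
            exact hyne (Set.mem_singleton_iff.mpr (hTS y hyT (hnj y hyclS hyV)))
          have hr₀acc : r₀ ∈ closure ((⋂ i, T i) \ {r₀}) :=
            mem_closure_diff_singleton hTpre hr₀T hzT hzr₀
          exact (closure_minimal hjunk (hC.isOpen.isClosed_compl) hr₀acc) hr₀V
      · -- separation case for (I)
        have hα : ∀ r' ∈ closure L, r' ∉ R := by
          intro r' hr'cl hr'R
          have hr'S : r' ∈ 𝒱.seg V a b := hr'R.1
          have hr'V : r' ∈ V := hmV hr'S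
          have hne : r' ≠ r₀ := fun h => hracc (h ▸ hr'cl)
          obtain ⟨W, hWo, hr'W, hWsub, hWc⟩ :=
            hC.basis r' hr'V {r₀}ᶜ isOpen_compl_singleton hne
          obtain ⟨l, hlW, hlL⟩ := mem_closure_iff.mp hr'cl W hWo hr'W
          have h1 : r₀ ∈ 𝒱.seg V l r' :=
            seg_mem_between hC ha hb hlL.1 hr'S hr₀S (hLle l hlL) (hr₀min r' hr'R)
          exact (hWsub (hWc l hlW r' hr'W h1)).1 rfl
        have hβ : ∀ l' ∈ L, l' ∉ closure R := by
          intro l' hl'L hl'cl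
          have hl'S : l' ∈ 𝒱.seg V a b := hl'L.1
          have hl'V : l' ∈ V := hmV hl'S
          have hne : l' ≠ r₀ := fun h => hLnR hl'L (h ▸ hr₀R)
          obtain ⟨W, hWo, hl'W, hWsub, hWc⟩ :=
            hC.basis l' hl'V {r₀}ᶜ isOpen_compl_singleton hne
          obtain ⟨r'', hr''W, hr''R⟩ := mem_closure_iff.mp hl'cl W hWo hl'W
          have h1 : r₀ ∈ 𝒱.seg V l' r'' :=
            seg_mem_between hC ha hb hl'S hr''R.1 hr₀S (hLle l' hl'L) (hr₀min r'' hr''R)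
          exact (hWsub (hWc l' hl'W r'' hr''W h1)).1 rfl
        exact hsep hα hβ
  · by_cases hmax : ∃ m ∈ L, ∀ s ∈ L, s ∈ 𝒱.seg V a m
    · -- no min, max exists : case (II)
      obtain ⟨m₀, hm₀L, hm₀max⟩ := hmax
      have hm₀S : m₀ ∈ 𝒱.seg V a b := hm₀L.1
      have hm₀V : m₀ ∈ V := hmV hm₀S
      have hzm₀ : z ≠ m₀ := fun h => hzS (h ▸ hm₀S)
      have hRge : ∀ r ∈ R, m₀ ∈ 𝒱.seg V a r := fun r hr => horder m₀ hm₀L r hr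
      have key2 : ∀ r ∈ R, z ∈ closure (𝒱.seg V m₀ r) := by
        intro r hr
        have hsplit := seg_split hC ha (hmV hr.1) (hRge r hr)
        have hz' : z ∈ closure (𝒱.seg V a m₀) ∪ closure (𝒱.seg V m₀ r) := by
          rw [← closure_union, hsplit]
          exact hr.2
        exact hz'.resolve_left hm₀L.2
      by_cases hmacc : m₀ ∈ closure R
      · rcases halt with hzV | hnj
        · obtain ⟨W, hWo, hm₀W, hWV, hzW, hWc⟩ :=
            exists_convex_open_regular 𝒱 hY hV hm₀V hzV hzm₀
          obtain ⟨r, hrW, hrR⟩ := mem_closure_iff.mp hmacc W hWo hm₀W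
          exact hzW (closure_mono (hWc m₀ hm₀W r hrW) (key2 r hrR))
        · haveI : Nonempty ↥R := ⟨⟨b, hbR⟩⟩
          set T : ↥R → Set Y := fun r => closure (𝒱.seg V m₀ r.1) with hTdef
          have hmono : ∀ i j : ↥R, j.1 ∈ 𝒱.seg V a i.1 → T i ⊇ T j := by
            intro i j hji
            have hj' : j.1 ∈ 𝒱.seg V m₀ i.1 :=
              seg_mem_between hC ha hb hm₀S i.2.1 j.2.1 (hRge j.1 j.2) hji
            exact closure_mono (hC.convex m₀ hm₀V i.1 (hmV i.2.1) m₀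
              (hC.mem_left m₀ hm₀V i.1 (hmV i.2.1)) j.1 hj')
          have hTdir : Directed (· ⊇ ·) T := by
            intro i j
            rcases seg_total hC ha hb i.2.1 j.2.1 with hji | hij
            · exact ⟨j, hmono i j hji, subset_rfl⟩
            · exact ⟨i, subset_rfl, hmono j i hij⟩
          have hTcpt : ∀ i, IsCompact (T i) := fun i =>
            isCompact_closure_seg 𝒱 hY hV hm₀V (hmV i.2.1)
          have hTpc : ∀ i, IsPreconnected (T i) := fun i =>
            (hC.preconnected m₀ hm₀V i.1 (hmV i.2.1)).closure
          have hTne : ∀ i, (T i).Nonempty := fun i =>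
            ⟨m₀, subset_closure (hC.mem_left m₀ hm₀V i.1 (hmV i.2.1))⟩
          have hTpre := isPreconnected_iInter_directed hTdir hTcpt
            (fun _ => isClosed_closure) hTpc hTne
          have hzT : z ∈ ⋂ i, T i := Set.mem_iInter.2 fun i => key2 i.1 i.2
          have hm₀T : m₀ ∈ ⋂ i, T i := Set.mem_iInter.2 fun i =>
            subset_closure (hC.mem_left m₀ hm₀V i.1 (hmV i.2.1))
          have hTS : ∀ x ∈ (⋂ i, T i), x ∈ 𝒱.seg V a b → x = m₀ := by
            intro x hxT hxS
            have hall : ∀ r, ∀ hr : r ∈ R, x ∈ 𝒱.seg V a r := by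
              intro r hr
              have hxmr : x ∈ 𝒱.seg V m₀ r :=
                closure_seg_inter hC ha hb hm₀S hr.1 (hRge r hr)
                  ⟨Set.mem_iInter.1 hxT ⟨r, hr⟩, hxS⟩
              exact (seg_between_mem hC ha hb hm₀S hr.1 (hRge r hr) hxmr).2
            rcases hLR x hxS with hxL | hxR
            · have hm₀x : m₀ ∈ 𝒱.seg V a x := by
                have hxmb : x ∈ 𝒱.seg V m₀ b :=
                  closure_seg_inter hC ha hb hm₀S hbS (hRge b hbR)
                    ⟨Set.mem_iInter.1 hxT ⟨b, hbR⟩, hxS⟩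
                exact (seg_between_mem hC ha hb hm₀S hbS (hRge b hbR) hxmb).1
              exact seg_antisymm_left hC ha hb hxS hm₀S (hm₀max x hxL) hm₀x
            · exact absurd ⟨x, hxR, fun r hr => hall r hr⟩ hmin
          have hjunk : (⋂ i, T i) \ {m₀} ⊆ Vᶜ := by
            rintro y ⟨hyT, hyne⟩ hyV
            have hyclS : y ∈ closure (𝒱.seg V a b) :=
              closure_mono (hC.convex a ha b hb m₀ hm₀S b hbS)
                (Set.mem_iInter.1 hyT ⟨b, hbR⟩)
            exact hyne (Set.mem_singleton_iff.mpr (hTS y hyT (hnj y hyclS hyV)))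
          have hm₀acc : m₀ ∈ closure ((⋂ i, T i) \ {m₀}) :=
            mem_closure_diff_singleton hTpre hm₀T hzT hzm₀
          exact (closure_minimal hjunk (hC.isOpen.isClosed_compl) hm₀acc) hm₀V
      · have hα : ∀ r' ∈ closure L, r' ∉ R := by
          intro r' hr'cl hr'R
          have hr'S : r' ∈ 𝒱.seg V a b := hr'R.1
          have hr'V : r' ∈ V := hmV hr'S
          have hne : r' ≠ m₀ := fun h => hLnR hm₀L (h ▸ hr'R)
          obtain ⟨W, hWo, hr'W, hWsub, hWc⟩ :=
            hC.basis r' hr'V {m₀}ᶜ isOpen_compl_singleton hne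
          obtain ⟨l, hlW, hlL⟩ := mem_closure_iff.mp hr'cl W hWo hr'W
          have h1 : m₀ ∈ 𝒱.seg V l r' :=
            seg_mem_between hC ha hb hlL.1 hr'S hm₀S (hm₀max l hlL) (hRge r' hr'R)
          exact (hWsub (hWc l hlW r' hr'W h1)).1 rfl
        have hβ : ∀ l' ∈ L, l' ∉ closure R := by
          intro l' hl'L hl'cl
          by_cases hlm : l' = m₀
          · exact hmacc (hlm ▸ hl'cl)
          · have hl'S : l' ∈ 𝒱.seg V a b := hl'L.1
            have hl'V : l' ∈ V := hmV hl'S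
            obtain ⟨W, hWo, hl'W, hWsub, hWc⟩ :=
              hC.basis l' hl'V {m₀}ᶜ isOpen_compl_singleton hlm
            obtain ⟨r'', hr''W, hr''R⟩ := mem_closure_iff.mp hl'cl W hWo hl'W
            have h1 : m₀ ∈ 𝒱.seg V l' r'' :=
              seg_mem_between hC ha hb hl'S hr''R.1 hm₀S (hm₀max l' hl'L) (hRge r'' hr''R)
            exact (hWsub (hWc l' hl'W r'' hr''W h1)).1 rfl
        exact hsep hα hβ
    · -- neither min nor max : case (III)
      push_neg at hmin hmax
      have hα : ∀ r' ∈ closure L, r' ∉ R := by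
        intro r' hr'cl hr'R
        have hr'S : r' ∈ 𝒱.seg V a b := hr'R.1
        have hr'V : r' ∈ V := hmV hr'S
        obtain ⟨r'', hr''R, hr''⟩ := hmin r' hr'R
        have hr''S : r'' ∈ 𝒱.seg V a b := hr''R.1
        have hr''le : r'' ∈ 𝒱.seg V a r' :=
          (seg_total hC ha hb hr'S hr''S).resolve_right hr''
        have hne : r' ≠ r'' := by
          rintro rfl
          exact hr'' (hC.mem_right a ha r' hr'V)
        obtain ⟨W, hWo, hr'W, hWsub, hWc⟩ :=
          hC.basis r' hr'V {r''}ᶜ isOpen_compl_singleton hne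
        obtain ⟨l, hlW, hlL⟩ := mem_closure_iff.mp hr'cl W hWo hr'W
        have h1 : r'' ∈ 𝒱.seg V l r' :=
          seg_mem_between hC ha hb hlL.1 hr'S hr''S (horder l hlL r'' hr''R) hr''le
        exact (hWsub (hWc l hlW r' hr'W h1)).1 rfl
      have hβ : ∀ l' ∈ L, l' ∉ closure R := by
        intro l' hl'L hl'cl
        have hl'S : l' ∈ 𝒱.seg V a b := hl'L.1
        have hl'V : l' ∈ V := hmV hl'S
        obtain ⟨l'', hl''L, hl''⟩ := hmax l' hl'L
        have hl''S : l'' ∈ 𝒱.seg V a b := hl''L.1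
        have hl'le : l' ∈ 𝒱.seg V a l'' :=
          (seg_total hC ha hb hl''S hl'S).resolve_right hl''
        have hne : l' ≠ l'' := by
          rintro rfl
          exact hl'' (hC.mem_right a ha l' hl'V)
        obtain ⟨W, hWo, hl'W, hWsub, hWc⟩ :=
          hC.basis l' hl'V {l''}ᶜ isOpen_compl_singleton hne
        obtain ⟨r'', hr''W, hr''R⟩ := mem_closure_iff.mp hl'cl W hWo hl'W
        have h1 : l'' ∈ 𝒱.seg V l' r'' :=
          seg_mem_between hC ha hb hl'S hr''R.1 hl''S hl'le (horder l'' hl''L r'' hr''R)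
        exact (hWsub (hWc l' hl'W r'' hr''W h1)).1 rfl
      exact hsep hα hβ

end SegClosedMain
section CCC

open Set

variable {Y : Type v} [TopologicalSpace Y]

lemma seg_isClosed (𝒱 : LocalConvexityStructure Y) (hY : IsGeodesicQManifold 𝒱)
    {V : Set Y} (hV : V ∈ 𝒱.atlas) {a b : Y} (ha : a ∈ V) (hb : b ∈ V) :
    IsClosed (𝒱.seg V a b) := by
  rw [← closure_subset_iff_isClosed]
  intro z hz
  by_contra hzS
  by_cases hj : ∃ y ∈ closure (𝒱.seg V a b), y ∉ 𝒱.seg V a b ∧ y ∈ V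
  · obtain ⟨y, hycl, hyS, hyV⟩ := hj
    exact seg_closed_aux 𝒱 hY hV ha hb hycl hyS (Or.inl hyV)
  · push_neg at hj
    refine seg_closed_aux 𝒱 hY hV ha hb hz hzS (Or.inr fun y hy hyV => ?_)
    by_contra h
    exact hj y hy h hyV

lemma isCompact_seg (𝒱 : LocalConvexityStructure Y) (hY : IsGeodesicQManifold 𝒱)
    {V : Set Y} (hV : V ∈ 𝒱.atlas) {a b : Y} (ha : a ∈ V) (hb : b ∈ V) :
    IsCompact (𝒱.seg V a b) :=
  (isCompact_closure_seg 𝒱 hY hV ha hb).of_isClosed_subset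
    (seg_isClosed 𝒱 hY hV ha hb) subset_closure

/-- The closure of a convex set is convex (in a geodesic q-manifold). -/
lemma isConvexSet_closure (𝒱 : LocalConvexityStructure Y) (hY : IsGeodesicQManifold 𝒱)
    {H : Set Y} (hH : 𝒱.IsConvexSet H) : 𝒱.IsConvexSet (closure H) := by
  haveI hT2 : T2Space Y := hY.t2
  intro V hV u hu v hv
  have hC := 𝒱.convexity V hV
  have huV : u ∈ V := hu.2
  have hvV : v ∈ V := hv.2
  intro w hw
  refine ⟨?_, hC.segment_subset u huV v hvV hw⟩
  by_contra hwO
  have huS : u ∈ 𝒱.seg V u v := hC.mem_left u huV v hvV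
  have hvS : v ∈ 𝒱.seg V u v := hC.mem_right u huV v hvV
  have hScpt : IsCompact (𝒱.seg V u v) := isCompact_seg 𝒱 hY hV huV hvV
  set D : Set Y := 𝒱.seg V u v ∩ closure H with hDdef
  have hDcpt : IsCompact D :=
    hScpt.of_isClosed_subset ((seg_isClosed 𝒱 hY hV huV hvV).inter isClosed_closure)
      inter_subset_left
  have huD : u ∈ D := ⟨huS, hu.1⟩
  have hvD : v ∈ D := ⟨hvS, hv.1⟩
  haveI : CompactSpace ↥D := isCompact_iff_compactSpace.mp hDcpt
  set u' : ↥D := ⟨u, huD⟩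
  set v' : ↥D := ⟨v, hvD⟩
  have hcomp : v' ∉ connectedComponent u' := by
    intro hmem
    have hpre : IsPreconnected (Subtype.val '' connectedComponent u') :=
      isPreconnected_connectedComponent.image _ continuous_subtype_val.continuousOn
    have hsubS : Subtype.val '' connectedComponent u' ⊆ 𝒱.seg V u v := by
      rintro x ⟨x', -, rfl⟩
      exact x'.2.1
    have heq := hC.minimal u huV v hvV (Subtype.val '' connectedComponent u') hsubS
      ⟨u', mem_connectedComponent, rfl⟩ ⟨v', hmem, rfl⟩ hpre
    have hwD : w ∈ Subtype.val '' connectedComponent u' := heq ▸ hw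
    obtain ⟨w', -, rfl⟩ := hwD
    exact hwO w'.2.2
  obtain ⟨D', hD'clopen, huD', hvD'⟩ := exists_isClopen_not_mem hcomp
  set D₁ : Set Y := Subtype.val '' D' with hD₁def
  set D₂ : Set Y := Subtype.val '' (D'ᶜ) with hD₂def
  have hD₁cpt : IsCompact D₁ :=
    (hD'clopen.isClosed.isCompact).image continuous_subtype_val
  have hD₂cpt : IsCompact D₂ :=
    ((hD'clopen.isOpen.isClosed_compl).isCompact).image continuous_subtype_val
  have hdisj : Disjoint D₁ D₂ := by
    rw [Set.disjoint_left]
    rintro x ⟨x₁, hx₁, rfl⟩ ⟨x₂, hx₂, hx₂eq⟩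
    have : x₂ = x₁ := Subtype.coe_injective hx₂eq
    exact hx₂ (this ▸ hx₁)
  obtain ⟨W₁, W₂, hW₁o, hW₂o, hDW₁, hDW₂, hWdisj⟩ :=
    SeparatedNhds.of_isCompact_isCompact hD₁cpt hD₂cpt hdisj
  have hcovD : D ⊆ W₁ ∪ W₂ := by
    intro x hx
    by_cases hx' : (⟨x, hx⟩ : ↥D) ∈ D'
    · exact Or.inl (hDW₁ ⟨⟨x, hx⟩, hx', rfl⟩)
    · exact Or.inr (hDW₂ ⟨⟨x, hx⟩, hx', rfl⟩)
  have hScov : 𝒱.seg V u v ⊆ (closure H)ᶜ ∪ W₁ ∪ W₂ := by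
    intro x hx
    by_cases hxH : x ∈ closure H
    · rcases hcovD ⟨hx, hxH⟩ with h | h
      · exact Or.inl (Or.inr h)
      · exact Or.inr h
    · exact Or.inl (Or.inl hxH)
  obtain ⟨A, B, hAo, hBo, huA, hvB, hprop⟩ := hC.continuity u huV v hvV
    ((closure H)ᶜ ∪ W₁ ∪ W₂)
    (((isClosed_closure.isOpen_compl).union hW₁o).union hW₂o) hScov
  have huW₁ : u ∈ W₁ := hDW₁ ⟨u', huD', rfl⟩
  have hvW₂ : v ∈ W₂ := hDW₂ ⟨v', hvD', rfl⟩
  obtain ⟨u'', hu''⟩ := mem_closure_iff.mp hu.1 (A ∩ W₁ ∩ V)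
    ((hAo.inter hW₁o).inter hC.isOpen) ⟨⟨huA, huW₁⟩, huV⟩
  obtain ⟨v'', hv''⟩ := mem_closure_iff.mp hv.1 (B ∩ W₂ ∩ V)
    ((hBo.inter hW₂o).inter hC.isOpen) ⟨⟨hvB, hvW₂⟩, hvV⟩
  obtain ⟨⟨⟨hu''A, hu''W₁⟩, hu''V⟩, hu''H⟩ := hu''
  obtain ⟨⟨⟨hv''B, hv''W₂⟩, hv''V⟩, hv''H⟩ := hv''
  have hRW : 𝒱.seg V u'' v'' ⊆ (closure H)ᶜ ∪ W₁ ∪ W₂ :=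
    hprop u'' ⟨hu''A, hu''V⟩ v'' ⟨hv''B, hv''V⟩
  have hRH : 𝒱.seg V u'' v'' ⊆ H := by
    intro x hx
    exact (hH V hV u'' ⟨hu''H, hu''V⟩ v'' ⟨hv''H, hv''V⟩ hx).1
  have hRW' : 𝒱.seg V u'' v'' ⊆ W₁ ∪ W₂ := by
    intro x hx
    rcases hRW hx with (h | h) | h
    · exact absurd (subset_closure (hRH hx)) h
    · exact Or.inl h
    · exact Or.inr h
  obtain ⟨y, -, hy⟩ := hC.preconnected u'' hu''V v'' hv''V W₁ W₂ hW₁o hW₂o hRW'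
    ⟨u'', hC.mem_left u'' hu''V v'' hv''V, hu''W₁⟩
    ⟨v'', hC.mem_right u'' hu''V v'' hv''V, hv''W₂⟩
  exact absurd (hWdisj.le_bot hy) (by simp)

end CCC
section Seed

open Set

variable {Y : Type v} [TopologicalSpace Y]

lemma hull_insert_preconn (𝒱 : LocalConvexityStructure Y) {F : Set Y}
    (hF : IsPreconnected (𝒱.hull F)) {c d : Y} (hcF : c ∈ F) {V : Set Y}
    (hV : V ∈ 𝒱.atlas) (hcV : c ∈ V) (hdV : d ∈ V) :
    IsPreconnected (𝒱.hull (insert d F)) := by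
  have hC := 𝒱.convexity V hV
  set H' : Set Y := 𝒱.hull (insert d F) with hH'
  have hmono : 𝒱.hull F ⊆ H' :=
    hull_min ((subset_insert d F).trans (subset_hull 𝒱 _)) (isConvexSet_hull 𝒱 _)
  have hsegH' : 𝒱.seg V c d ⊆ H' := by
    intro x hx
    exact (isConvexSet_hull 𝒱 (insert d F) V hV c
      ⟨subset_hull 𝒱 _ (Set.mem_insert_of_mem d hcF), hcV⟩ d
      ⟨subset_hull 𝒱 _ (Set.mem_insert d F), hdV⟩ hx).1
  set W₀ : Set Y := 𝒱.hull F ∪ 𝒱.seg V c d with hW₀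
  have hW₀pre : IsPreconnected W₀ :=
    IsPreconnected.union c (subset_hull 𝒱 F hcF) (hC.mem_left c hcV d hdV) hF
      (hC.preconnected c hcV d hdV)
  set fam : Set (Set Y) := {E | E ⊆ H' ∧ IsPreconnected E ∧ d ∈ E} with hfam
  set T : Set Y := ⋃₀ fam with hT
  have hTpre : IsPreconnected T :=
    isPreconnected_sUnion d fam (fun E hE => hE.2.2) (fun E hE => hE.2.1)
  have hW₀mem : W₀ ∈ fam :=
    ⟨Set.union_subset hmono hsegH', hW₀pre, Or.inr (hC.mem_right c hcV d hdV)⟩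
  have hTH' : T ⊆ H' := Set.sUnion_subset fun E hE => hE.1
  have hH'T : H' ⊆ T := by
    apply hull_min
    · intro x hx
      rcases hx with rfl | hxF
      · exact ⟨{x}, ⟨Set.singleton_subset_iff.2 (subset_hull 𝒱 _ (Set.mem_insert x F)),
          isPreconnected_singleton, rfl⟩, rfl⟩
      · exact ⟨W₀, hW₀mem, Or.inl (subset_hull 𝒱 F hxF)⟩
    · intro V'' hV'' u₁ hu₁ v₁ hv₁
      have hC'' := 𝒱.convexity V'' hV''
      intro x hx
      refine ⟨?_, hC''.segment_subset u₁ hu₁.2 v₁ hv₁.2 hx⟩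
      obtain ⟨E, hE, hu₁E⟩ := hu₁.1
      have hsegsub : 𝒱.seg V'' u₁ v₁ ⊆ H' := by
        intro y hy
        exact (isConvexSet_hull 𝒱 (insert d F) V'' hV'' u₁ ⟨hTH' hu₁.1, hu₁.2⟩ v₁
          ⟨hTH' hv₁.1, hv₁.2⟩ hy).1
      refine ⟨E ∪ 𝒱.seg V'' u₁ v₁, ⟨Set.union_subset hE.1 hsegsub, ?_, Or.inl hE.2.2⟩,
        Or.inr hx⟩
      exact IsPreconnected.union u₁ hu₁E (hC''.mem_left u₁ hu₁.2 v₁ hv₁.2) hE.2.1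
        (hC''.preconnected u₁ hu₁.2 v₁ hv₁.2)
  have heq : H' = T := Set.Subset.antisymm hH'T hTH'
  show IsPreconnected H'
  rw [heq]
  exact hTpre

lemma exists_geodesic (𝒱 : LocalConvexityStructure Y) (hY : IsGeodesicQManifold 𝒱)
    {p q : Y} {F : Set Y} (hFfin : F.Finite) (hpF : p ∈ F) (hqF : q ∈ F)
    (hFpre : IsPreconnected (𝒱.hull F)) : Nonempty (GeodesicConnecting 𝒱 p q) := by
  classical
  haveI hT2 : T2Space Y := hY.t2
  set K₀ : Set Y := closure (𝒱.hull F) with hK₀def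
  have hK₀cpt : IsCompact K₀ := hY.hull_compact F hFfin
  have hK₀conv : 𝒱.IsConvexSet K₀ := isConvexSet_closure 𝒱 hY (isConvexSet_hull 𝒱 F)
  set fam : Set (Set Y) :=
    {A | A ⊆ K₀ ∧ IsClosed A ∧ IsPreconnected A ∧ p ∈ A ∧ q ∈ A ∧ 𝒱.IsConvexSet A}
    with hfamdef
  have hK₀fam : K₀ ∈ fam := ⟨subset_rfl, isClosed_closure, hFpre.closure,
    subset_closure (subset_hull 𝒱 F hpF), subset_closure (subset_hull 𝒱 F hqF), hK₀conv⟩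
  have hchain : ∀ c ⊆ fam, IsChain (· ⊆ ·) c → c.Nonempty →
      ∃ lb ∈ fam, ∀ s ∈ c, lb ⊆ s := by
    intro c hc hch hcne
    obtain ⟨A₀, hA₀⟩ := hcne
    haveI : Nonempty ↥c := ⟨⟨A₀, hA₀⟩⟩
    have hdir : Directed (· ⊇ ·) (fun A : ↥c => A.1) := by
      intro i j
      by_cases hij : i.1 = j.1
      · refine ⟨i, subset_rfl, ?_⟩
        show j.1 ⊇ i.1
        rw [hij]
      · rcases hch i.2 j.2 hij with h | h
        · exact ⟨i, subset_rfl, h⟩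
        · exact ⟨j, h, subset_rfl⟩
    have hpre : IsPreconnected (⋂₀ c) := by
      rw [Set.sInter_eq_iInter]
      exact isPreconnected_iInter_directed hdir
        (fun i => hK₀cpt.of_isClosed_subset (hc i.2).2.1 (hc i.2).1)
        (fun i => (hc i.2).2.1)
        (fun i => (hc i.2).2.2.1)
        (fun i => ⟨p, (hc i.2).2.2.2.1⟩)
    refine ⟨⋂₀ c, ⟨?_, ?_, hpre, ?_, ?_, ?_⟩, fun s hs => Set.sInter_subset_of_mem hs⟩
    · exact (Set.sInter_subset_of_mem hA₀).trans (hc hA₀).1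
    · exact isClosed_sInter fun A hA => (hc hA).2.1
    · exact Set.mem_sInter.2 fun A hA => (hc hA).2.2.2.1
    · exact Set.mem_sInter.2 fun A hA => (hc hA).2.2.2.2.1
    · intro V hV u hu v hv x hx
      refine ⟨Set.mem_sInter.2 fun A hA => ?_,
        (𝒱.convexity V hV).segment_subset u hu.2 v hv.2 hx⟩
      exact ((hc hA).2.2.2.2.2 V hV u ⟨Set.mem_sInter.1 hu.1 A hA, hu.2⟩ v
        ⟨Set.mem_sInter.1 hv.1 A hA, hv.2⟩ hx).1
  obtain ⟨M, hMsub, hMmin⟩ := zorn_superset_nonempty fam hchain K₀ hK₀fam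
  obtain ⟨hMK, hMcl, hMpre, hpM, hqM, hMconv⟩ := hMmin.1
  have hMcpt : IsCompact M := hK₀cpt.of_isClosed_subset hMcl hMK
  haveI : CompactSpace ↥M := isCompact_iff_compactSpace.mp hMcpt
  have chart_at : ∀ V ∈ 𝒱.atlas,
      IsEtaleChartTo 𝒱 (Subtype.val : ↥M → Y) (Subtype.val ⁻¹' V) V := by
    intro V hV
    refine ⟨((𝒱.convexity V hV).isOpen).preimage continuous_subtype_val,
      Subtype.coe_injective.injOn, ?_, hV, ?_, ?_⟩
    · intro W hWsub hWopen
      obtain ⟨O, hOo, hOW⟩ := isOpen_induced_iff.mp hWopen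
      refine ⟨O, hOo, ?_⟩
      rw [← hOW, Subtype.image_preimage_coe, Subtype.image_preimage_coe]
      ext x
      constructor
      · rintro ⟨hxM, hxO⟩
        have hxW : (⟨x, hxM⟩ : ↥M) ∈ W := by rw [← hOW]; exact hxO
        have hxV : (⟨x, hxM⟩ : ↥M) ∈ (Subtype.val ⁻¹' V : Set ↥M) := hWsub hxW
        exact ⟨hxO, hxM, hxV⟩
      · rintro ⟨hxO, hxM, -⟩
        exact ⟨hxM, hxO⟩
    · rw [Subtype.image_preimage_coe]
      exact Set.inter_subset_right
    · rw [Subtype.image_preimage_coe]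
      intro p' hp' q' hq'
      exact hMconv V hV p' hp' q' hq'
  have hMconn : IsConnected M := ⟨⟨p, hpM⟩, hMpre⟩
  have hetale : IsEtale 𝒱 (Subtype.val : ↥M → Y) := by
    refine ⟨continuous_subtype_val, Subtype.connectedSpace hMconn,
      hMcl.isClosedEmbedding_subtypeVal.isClosedMap, ?_⟩
    intro z
    obtain ⟨V, hV, hzV⟩ := 𝒱.covers z.1
    exact ⟨Subtype.val ⁻¹' V, ⟨V, chart_at V hV⟩, hzV⟩
  have hgen : Generates 𝒱 (Subtype.val : ↥M → Y)
      {(⟨p, hpM⟩ : ↥M), (⟨q, hqM⟩ : ↥M)} := by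
    rintro ⟨A, hAne, hAcl, hApre, hAxy, hAconv⟩
    set B : Set Y := Subtype.val '' A with hBdef
    have hBM : B ⊆ M := by rintro x ⟨x', -, rfl⟩; exact x'.2
    have hBfam : B ∈ fam := by
      refine ⟨hBM.trans hMK, ((hAcl.isCompact).image continuous_subtype_val).isClosed,
        hApre.image _ continuous_subtype_val.continuousOn, ?_, ?_, ?_⟩
      · exact ⟨⟨p, hpM⟩, hAxy (Set.mem_insert _ _), rfl⟩
      · exact ⟨⟨q, hqM⟩, hAxy (Set.mem_insert_of_mem _ rfl), rfl⟩
      · intro V hV u hu v hv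
        have hconv := hAconv (Subtype.val ⁻¹' V) ⟨V, chart_at V hV⟩
        have himg : Subtype.val '' ((Subtype.val ⁻¹' V : Set ↥M) ∩ A) = B ∩ V := by
          ext x
          constructor
          · rintro ⟨x', ⟨hx'V, hx'A⟩, rfl⟩
            exact ⟨⟨x', hx'A, rfl⟩, hx'V⟩
          · rintro ⟨⟨x', hx'A, rfl⟩, hxV⟩
            exact ⟨x', ⟨hxV, hx'A⟩, rfl⟩
        rw [himg] at hconv
        intro x hx
        exact (hconv V hV u ⟨⟨hu.1, hu.2⟩, hu.2⟩ v ⟨⟨hv.1, hv.2⟩, hv.2⟩ hx).1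
    have hBeq : B = M := Set.Subset.antisymm hBM (hMmin.2 hBfam hBM)
    apply hAne
    have himg2 : Subtype.val '' A = Subtype.val '' (Set.univ : Set ↥M) := by
      rw [Subtype.coe_image_univ]
      exact hBeq
    exact Subtype.coe_injective.image_injective himg2
  exact ⟨{ Z := ↥M
           ts := inferInstance
           e := Subtype.val
           x := ⟨p, hpM⟩
           y := ⟨q, hqM⟩
           compact := inferInstance
           etale := hetale
           generates := hgen
           endpoint_left := rfl
           endpoint_right := rfl }⟩

end Seed
/-- Theorem 3, the Lokal-global-Prinzip: Let `f : X → Y` be a locally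
convex continuous map from a connected topological space `X` to a geodesic q-manifold `Y`,
and assume that the induced map `f# : X^f → Y` is a closed map.  Then the image `f(X)` is
weakly convex: any two points of `f(X)` are the end points of some geodesic in `Y`. -/
theorem stmt_18 {X : Type u} {Y : Type v} [TopologicalSpace X] [TopologicalSpace Y]
    [ConnectedSpace X] (𝒱 : LocalConvexityStructure Y) (hY : IsGeodesicQManifold 𝒱)
    (f : X → Y) (hf : Continuous f) (hlc : IsLocallyConvexMap 𝒱 f)
    (hcl : IsClosedMap (fSharp f)) :
    𝒱.WeaklyConvex (Set.range f) := by
  classical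
  rintro p ⟨xa, rfl⟩ q ⟨xb, rfl⟩
  set good : Set X :=
    {z | ∃ F : Set Y, F.Finite ∧ f xa ∈ F ∧ f z ∈ F ∧ IsPreconnected (𝒱.hull F)}
    with hgooddef
  have hgoodopen : IsOpen good := by
    rw [isOpen_iff_forall_mem_open]
    intro z hz
    obtain ⟨F, hFfin, hpF, hzF, hpre⟩ := hz
    obtain ⟨U, hUopen, hzU, -, V, hV, hfUV, -⟩ := hlc z
    refine ⟨U, ?_, hUopen, hzU⟩
    intro z' hz'
    exact ⟨insert (f z') F, hFfin.insert _, Set.mem_insert_of_mem _ hpF,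
      Set.mem_insert _ _,
      hull_insert_preconn 𝒱 hpre hzF hV (hfUV ⟨z, hzU, rfl⟩) (hfUV ⟨z', hz', rfl⟩)⟩
  have hgoodclosed : IsClosed good := by
    rw [← closure_subset_iff_isClosed]
    intro z hz
    obtain ⟨U, hUopen, hzU, -, V, hV, hfUV, -⟩ := hlc z
    obtain ⟨z', hz'U, hz'good⟩ := mem_closure_iff.mp hz U hUopen hzU
    obtain ⟨F, hFfin, hpF, hz'F, hpre⟩ := hz'good
    exact ⟨insert (f z) F, hFfin.insert _, Set.mem_insert_of_mem _ hpF,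
      Set.mem_insert _ _,
      hull_insert_preconn 𝒱 hpre hz'F hV (hfUV ⟨z', hz'U, rfl⟩) (hfUV ⟨z, hzU, rfl⟩)⟩
  have hxa : xa ∈ good := ⟨{f xa}, Set.finite_singleton _, rfl, rfl, by
    rw [hull_singleton]
    exact isPreconnected_singleton⟩
  have huniv : good = Set.univ := IsClopen.eq_univ ⟨hgoodclosed, hgoodopen⟩ ⟨xa, hxa⟩
  have hxb : xb ∈ good := huniv ▸ Set.mem_univ xb
  obtain ⟨F, hFfin, hpF, hqF, hpre⟩ := hxb
  exact exists_geodesic 𝒱 hY hFfin hpF hqF hpre
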